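/- If a simplicial complex K contains two leaves sharing a common vertex (i.e., there are edges ab and ac with b and c having degree 1), then the Morse complex M(K) is strongly collapsible. -/

import Mathlib

open Finset

/-- An abstract simplicial complex on vertex type `V`. -/
structure SComplex (V : Type*) where
  faces : Finset V → Prop
  not_empty : ¬ faces ∅
  down_closed : ∀ {σ τ : Finset V}, faces τ → σ ⊆ τ → σ.Nonempty → faces σ

/-- The complex generated by a set of simplices (downward closure). -/
def ofGens {V : Type*} (gens : Set (Finset V)) : SComplex V where
  faces σ := σ.Nonempty ∧ ∃ τ ∈ gens, σ ⊆ τ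
  not_empty h := by simpa using h.1
  down_closed := by
    rintro σ τ ⟨-, τ', hτ', hsub'⟩ hsub hne
    exact ⟨hne, τ', hτ', hsub.trans hsub'⟩

/-- A primitive (gradient) vector field on `K`: a single regular pair `(σ, τ)`
with `σ` a codimension-one face of `τ`. -/
structure VPair {V : Type*} (K : SComplex V) where
  lo : Finset V
  hi : Finset V
  lo_face : K.faces lo
  hi_face : K.faces hi
  lo_sub : lo ⊆ hi
  card_eq : hi.card = lo.card + 1

noncomputable instance {V : Type*} (K : SComplex V) : DecidableEq (VPair K) :=
  Classical.decEq _

/-- Two primitive pairs share no simplex. -/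
def VPair.Compatible {V : Type*} {K : SComplex V} (p q : VPair K) : Prop :=
  p.lo ≠ q.lo ∧ p.lo ≠ q.hi ∧ p.hi ≠ q.lo ∧ p.hi ≠ q.hi

/-- A discrete vector field: each simplex occurs in at most one pair. -/
def IsDVF {V : Type*} {K : SComplex V} (W : Set (VPair K)) : Prop :=
  ∀ p ∈ W, ∀ q ∈ W, p ≠ q → VPair.Compatible p q

/-- Existence of a nontrivial closed `V`-path. -/
def HasClosedPath {V : Type*} {K : SComplex V} (W : Set (VPair K)) : Prop :=
  ∃ k : ℕ, 0 < k ∧ ∃ c : ZMod k → VPair K, (∀ i, c i ∈ W) ∧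
    ∀ i, (c (i + 1)).lo ⊆ (c i).hi ∧ (c (i + 1)).lo ≠ (c i).lo ∧
      (c (i + 1)).lo.card + 1 = (c i).hi.card

/-- A gradient vector field: a discrete vector field with no nontrivial closed path. -/
def IsGVF {V : Type*} {K : SComplex V} (W : Set (VPair K)) : Prop :=
  IsDVF W ∧ ¬ HasClosedPath W

/-- The Morse complex of `K`: vertices are primitive gradient vector fields,
simplices are gradient vector fields. -/
def MorseComplex {V : Type*} (K : SComplex V) : SComplex (VPair K) where
  faces S := S.Nonempty ∧ IsGVF {p | p ∈ S}
  not_empty h := by simpa using h.1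
  down_closed := by
    rintro σ τ ⟨hne', hdvf, hnc⟩ hsub hne
    refine ⟨hne, fun p hp q hq hpq => hdvf p (hsub hp) q (hsub hq) hpq, fun h => hnc ?_⟩
    obtain ⟨k, hk, c, hc, hpath⟩ := h
    exact ⟨k, hk, c, fun i => hsub (hc i), hpath⟩

/-- The pure Morse complex: the subcomplex of `MorseComplex K` generated by the
facets of maximum dimension (maximum gradient vector fields). -/
def pureMorse {V : Type*} (K : SComplex V) : SComplex (VPair K) where
  faces S := (MorseComplex K).faces S ∧ ∃ T : Finset (VPair K), S ⊆ T ∧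
      (MorseComplex K).faces T ∧
      ∀ T' : Finset (VPair K), (MorseComplex K).faces T' → T'.card ≤ T.card
  not_empty h := (MorseComplex K).not_empty h.1
  down_closed := by
    rintro σ τ ⟨hτ, T, hsub', hT, hmax⟩ hsub hne
    exact ⟨(MorseComplex K).down_closed hτ hsub hne, T, hsub.trans hsub', hT, hmax⟩

/-- `σ` is a facet (maximal simplex) of `K`. -/
def IsFacet {V : Type*} (K : SComplex V) (σ : Finset V) : Prop :=
  K.faces σ ∧ ∀ τ, K.faces τ → σ ⊆ τ → σ = τ

/-- `w` dominates `w'`: every facet containing `w'` contains `w`. -/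
def Dominates {V : Type*} (K : SComplex V) (w w' : V) : Prop :=
  ∀ σ, IsFacet K σ → w' ∈ σ → w ∈ σ

/-- `K` is minimal: no vertex dominates another vertex. -/
def MinimalComplex {V : Type*} (K : SComplex V) : Prop :=
  ∀ w w' : V, K.faces {w} → K.faces {w'} → w ≠ w' → ¬ Dominates K w w'

/-- Strong collapsibility of a face predicate: a sequence of removals of
dominated vertices reaching a single point. -/
inductive SCAux {V : Type*} : (Finset V → Prop) → Prop
  | point (F : Finset V → Prop) (v : V) (h : ∀ σ, F σ ↔ σ = {v}) : SCAux F
  | step (F : Finset V → Prop) (w w' : V) (hne : w ≠ w') (hw : F {w}) (hw' : F {w'})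
      (hdom : ∀ σ, (F σ ∧ ∀ τ, F τ → σ ⊆ τ → σ = τ) → w' ∈ σ → w ∈ σ)
      (h : SCAux (fun σ => F σ ∧ w' ∉ σ)) : SCAux F

def StronglyCollapsible {V : Type*} (K : SComplex V) : Prop := SCAux K.faces

/-- `F` strongly collapses to `G` by a sequence of removals of dominated vertices. -/
inductive SCTo {V : Type*} : (Finset V → Prop) → (Finset V → Prop) → Prop
  | refl (F : Finset V → Prop) : SCTo F F
  | step (F G : Finset V → Prop) (w w' : V) (hne : w ≠ w') (hw : F {w}) (hw' : F {w'})
      (hdom : ∀ σ, (F σ ∧ ∀ τ, F τ → σ ⊆ τ → σ = τ) → w' ∈ σ → w ∈ σ)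
      (h : SCTo (fun σ => F σ ∧ w' ∉ σ) G) : SCTo F G

/-- Collapsibility (Forman): removal of free pairs down to a point. -/
inductive CollAux {V : Type*} : (Finset V → Prop) → Prop
  | point (F : Finset V → Prop) (v : V) (h : ∀ σ, F σ ↔ σ = {v}) : CollAux F
  | step (F : Finset V → Prop) (σ τ : Finset V) (hστ : σ ⊂ τ) (hσ : F σ) (hτ : F τ)
      (hfree : ∀ ρ, F ρ → σ ⊂ ρ → ρ = τ)
      (h : CollAux (fun ρ => F ρ ∧ ρ ≠ σ ∧ ρ ≠ τ)) : CollAux F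

def Collapsible {V : Type*} (K : SComplex V) : Prop := CollAux K.faces

/-- The degree of a vertex: the number of edges of `K` containing it. -/
noncomputable def sdeg {V : Type*} (K : SComplex V) (x : V) : ℕ :=
  Set.ncard {σ : Finset V | K.faces σ ∧ σ.card = 2 ∧ x ∈ σ}

/-- Image of a finset, with a classical decidability instance. -/
noncomputable def fimage {V W : Type*} (f : V → W) (σ : Finset V) : Finset W :=
  haveI := Classical.decEq W
  σ.image f

/-- An isomorphism between two simplicial complexes given by face predicates. -/
structure ComplexIso {V W : Type*} (F : Finset V → Prop) (G : Finset W → Prop) where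
  toFun : V → W
  invFun : W → V
  left_inv : ∀ x, F {x} → invFun (toFun x) = x
  right_inv : ∀ y, G {y} → toFun (invFun y) = y
  map_face : ∀ σ, F σ → G (fimage toFun σ)
  inv_face : ∀ τ, G τ → F (fimage invFun τ)

/-- The join of two simplicial complexes. -/
def sJoin {V W : Type*} [DecidableEq V] [DecidableEq W] (K : SComplex V) (L : SComplex W) :
    SComplex (V ⊕ W) :=
  ofGens {σ | ∃ α β, (K.faces α ∨ α = ∅) ∧ (L.faces β ∨ β = ∅) ∧
    σ = α.image Sum.inl ∪ β.image Sum.inr}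

/-- The disjoint union of two simplicial complexes. -/
def sDisjUnion {V W : Type*} [DecidableEq V] [DecidableEq W] (K : SComplex V) (L : SComplex W) :
    SComplex (V ⊕ W) :=
  ofGens ({σ | ∃ α, K.faces α ∧ σ = α.image Sum.inl} ∪
          {σ | ∃ β, L.faces β ∧ σ = β.image Sum.inr})

/-- The simplicial complex of a simple graph (vertices and edges). -/
def graphComplex {V : Type*} [DecidableEq V] (G : SimpleGraph V) : SComplex V :=
  ofGens ({σ | ∃ x, σ = {x}} ∪ {σ | ∃ x y, G.Adj x y ∧ σ = ({x, y} : Finset V)})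

/-- Attach a leaf (pendant edge) to `K` at the vertex `x`. -/
def attachLeaf {V : Type*} [DecidableEq V] (K : SComplex V) (x : V) : SComplex (V ⊕ Unit) :=
  ofGens ({σ | ∃ α, K.faces α ∧ σ = α.image Sum.inl} ∪
          {({Sum.inl x, Sum.inr ()} : Finset (V ⊕ Unit))})

/-- The cycle graph on `ZMod n`. -/
def cycleGraph (n : ℕ) : SimpleGraph (ZMod n) :=
  SimpleGraph.fromRel (fun i j => j = i + 1)

/-- Attach one new leaf to every vertex of a graph. -/
def addLeaves {V : Type*} [DecidableEq V] (G : SimpleGraph V) : SComplex (V ⊕ V) :=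
  ofGens ({σ | ∃ x y, G.Adj x y ∧ σ = ({Sum.inl x, Sum.inl y} : Finset (V ⊕ V))} ∪
          {σ | ∃ u, σ = ({Sum.inl u, Sum.inr u} : Finset (V ⊕ V))})

/-- The geometric realization of `K`, inside `V → ℝ`. -/
def realization {V : Type*} (K : SComplex V) : Set (V → ℝ) :=
  {f | ∃ σ, K.faces σ ∧ (∀ x, 0 ≤ f x) ∧ (∀ x, f x ≠ 0 → x ∈ σ) ∧ ∑ x ∈ σ, f x = 1}

/-- A Hasse-diagram edge of a poset: a covering pair. -/
structure HEdge (P : Type*) [PartialOrder P] where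
  lo : P
  hi : P
  cov : lo ⋖ hi

noncomputable instance {P : Type*} [PartialOrder P] : DecidableEq (HEdge P) :=
  Classical.decEq _

def HEdge.Compat {P : Type*} [PartialOrder P] (p q : HEdge P) : Prop :=
  p.lo ≠ q.lo ∧ p.lo ≠ q.hi ∧ p.hi ≠ q.lo ∧ p.hi ≠ q.hi

def HasPosetCycle {P : Type*} [PartialOrder P] (W : Set (HEdge P)) : Prop :=
  ∃ k : ℕ, 0 < k ∧ ∃ c : ZMod k → HEdge P, (∀ i, c i ∈ W) ∧
    ∀ i, (c (i + 1)).lo ⋖ (c i).hi ∧ (c (i + 1)).lo ≠ (c i).lo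

/-- The generalized Morse complex `f(P)` of a poset: simplices are acyclic
matchings of the Hasse diagram of `P`. -/
def genMorse (P : Type*) [PartialOrder P] : SComplex (HEdge P) where
  faces S := S.Nonempty ∧ (∀ p ∈ S, ∀ q ∈ S, p ≠ q → HEdge.Compat p q) ∧
    ¬ HasPosetCycle {p | p ∈ S}
  not_empty h := by simpa using h.1
  down_closed := by
    rintro σ τ ⟨-, hm, hc⟩ hsub hne
    refine ⟨hne, fun p hp q hq h => hm p (hsub hp) q (hsub hq) h, fun h => hc ?_⟩
    obtain ⟨k, hk, c, hc', hp⟩ := h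
    exact ⟨k, hk, c, fun i => hsub (hc' i), hp⟩

/-- The automorphism group of a simplicial complex, as a subgroup of `Perm V`. -/
def autGroup {V : Type*} [DecidableEq V] (K : SComplex V) : Subgroup (Equiv.Perm V) where
  carrier := {e | ∀ σ : Finset V, K.faces σ ↔ K.faces (σ.image e)}
  one_mem' := by intro σ; simp
  mul_mem' := by
    intro a b ha hb σ
    rw [hb σ, ha (σ.image b)]
    simp [Finset.image_image, Equiv.Perm.coe_mul]
  inv_mem' := by
    intro a ha σ
    have := ha (σ.image ⇑a⁻¹)
    simpa [Finset.image_image, Function.comp_def,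
      Finset.image_id'] using this.symm

/-- The full subcomplex of `K` on a set `S` of vertices. -/
def restrictTo {V : Type*} (K : SComplex V) (S : Set V) : Finset V → Prop :=
  fun σ => K.faces σ ∧ ∀ x ∈ σ, x ∈ S

/-- `S` spans a fully connected subcomplex: `K = (K∣S) * (K∣Sᶜ)`. -/
def FullyConnected {V : Type*} [DecidableEq V] (K : SComplex V) (S : Set V) : Prop :=
  ∀ σ : Finset V, K.faces σ ↔ (σ.Nonempty ∧ ∃ α β : Finset V,
    (restrictTo K S α ∨ α = ∅) ∧ ((K.faces β ∧ ∀ x ∈ β, x ∉ S) ∨ β = ∅) ∧ σ = α ∪ β)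

/-- The primitive pair `(x, xy)` on an edge `{x,y}`. -/
def edgePair {V : Type*} [DecidableEq V] (K : SComplex V) (x y : V) (hxy : x ≠ y)
    (h : K.faces {x, y}) : VPair K where
  lo := {x}
  hi := {x, y}
  lo_face := K.down_closed h (by simp) (Finset.singleton_nonempty x)
  hi_face := h
  lo_sub := by simp
  card_eq := by
    rw [Finset.card_singleton, Finset.card_insert_of_notMem (by simp [hxy]),
      Finset.card_singleton]

section Aux

lemma face_nonempty {V : Type*} (K : SComplex V) {σ : Finset V} (h : K.faces σ) :
    σ.Nonempty := by
  rcases σ.eq_empty_or_nonempty with rfl | h'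
  · exact absurd h K.not_empty
  · exact h'

lemma vpair_ext {V : Type*} {K : SComplex V} {p q : VPair K}
    (h1 : p.lo = q.lo) (h2 : p.hi = q.hi) : p = q := by
  cases p; cases q; cases h1; cases h2; rfl

def leafPair {V : Type*} [DecidableEq V] (K : SComplex V) (a b : V) (hab : a ≠ b)
    (hfab : K.faces {a, b}) : VPair K where
  lo := {b}
  hi := {a, b}
  lo_face := K.down_closed hfab (by simp) (Finset.singleton_nonempty b)
  hi_face := hfab
  lo_sub := by simp
  card_eq := by simp [Finset.card_pair hab]

def apexPair {V : Type*} [DecidableEq V] (K : SComplex V) (a b : V) (hab : a ≠ b)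
    (hfab : K.faces {a, b}) : VPair K where
  lo := {a}
  hi := {a, b}
  lo_face := K.down_closed hfab (by simp) (Finset.singleton_nonempty a)
  hi_face := hfab
  lo_sub := by simp
  card_eq := by simp [Finset.card_pair hab]

lemma leaf_faces {V : Type*} [DecidableEq V] (K : SComplex V) (a b : V) (hab : a ≠ b)
    (hfab : K.faces {a, b}) (hb : sdeg K b = 1) :
    ∀ σ, K.faces σ → b ∈ σ → σ = {b} ∨ σ = {a, b} := by
  obtain ⟨τ, hτ⟩ := Set.ncard_eq_one.mp hb
  have habmem : ({a, b} : Finset V) ∈ {σ : Finset V | K.faces σ ∧ σ.card = 2 ∧ b ∈ σ} :=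
    ⟨hfab, Finset.card_pair hab, by simp⟩
  rw [hτ] at habmem
  have hτeq : τ = {a, b} := (Set.mem_singleton_iff.mp habmem).symm
  intro σ hσ hbσ
  have hsub : σ ⊆ {a, b} := by
    intro x hx
    by_contra hx'
    have hxb : x ≠ b := fun h => hx' (by simp [h])
    have hedge : K.faces {b, x} :=
      K.down_closed hσ (Finset.insert_subset hbσ (Finset.singleton_subset_iff.mpr hx))
        (Finset.insert_nonempty _ _)
    have hmem2 : ({b, x} : Finset V) ∈ {σ : Finset V | K.faces σ ∧ σ.card = 2 ∧ b ∈ σ} :=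
      ⟨hedge, Finset.card_pair (Ne.symm hxb), by simp⟩
    rw [hτ] at hmem2
    have heq : ({b, x} : Finset V) = {a, b} := by
      rw [Set.mem_singleton_iff.mp hmem2, hτeq]
    have : x ∈ ({a, b} : Finset V) := heq ▸ (by simp : x ∈ ({b, x} : Finset V))
    exact hx' this
  by_cases ha : a ∈ σ
  · right
    exact Finset.Subset.antisymm hsub
      (Finset.insert_subset ha (Finset.singleton_subset_iff.mpr hbσ))
  · left
    refine Finset.Subset.antisymm ?_ (Finset.singleton_subset_iff.mpr hbσ)
    intro x hx
    rcases Finset.mem_insert.mp (hsub hx) with rfl | h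
    · exact absurd hx ha
    · exact h

lemma leaf_pairs {V : Type*} [DecidableEq V] (K : SComplex V) (a b : V) (hab : a ≠ b)
    (hfab : K.faces {a, b}) (hb : sdeg K b = 1) :
    ∀ P : VPair K, b ∈ P.hi → P = leafPair K a b hab hfab ∨ P = apexPair K a b hab hfab := by
  intro P hbP
  rcases leaf_faces K a b hab hfab hb P.hi P.hi_face hbP with h | h
  · exfalso
    have h1 : P.hi.card = 1 := by rw [h]; simp
    have h2 : 0 < P.lo.card := Finset.card_pos.mpr (face_nonempty K P.lo_face)
    have h3 := P.card_eq
    omega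
  · have hcard : P.lo.card = 1 := by
      have h3 := P.card_eq
      rw [h, Finset.card_pair hab] at h3
      omega
    obtain ⟨x, hx⟩ := Finset.card_eq_one.mp hcard
    have hxmem : x ∈ ({a, b} : Finset V) := by
      have h4 := P.lo_sub
      rw [h, hx] at h4
      exact h4 (Finset.mem_singleton_self x)
    rcases Finset.mem_insert.mp hxmem with rfl | hxb
    · right; exact vpair_ext (by rw [hx]; rfl) (by rw [h]; rfl)
    · left
      exact vpair_ext (by rw [hx, Finset.mem_singleton.mp hxb]; rfl) (by rw [h]; rfl)

lemma extend_gvf {V : Type*} [DecidableEq V] (K : SComplex V) (a b : V) (hab : a ≠ b)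
    (hfab : K.faces {a, b}) (hb : sdeg K b = 1) (S : Set (VPair K))
    (hS : IsGVF S) (hra : apexPair K a b hab hfab ∉ S) :
    IsGVF (insert (leafPair K a b hab hfab) S) := by
  set pb := leafPair K a b hab hfab with hpbdef
  have hbpb_lo : b ∈ pb.lo := by simp [hpbdef, leafPair]
  have hbpb_hi : b ∈ pb.hi := pb.lo_sub hbpb_lo
  have key : ∀ q ∈ S, b ∈ q.lo ∨ b ∈ q.hi → q = pb := by
    intro q hq hbq
    have hbhi : b ∈ q.hi := hbq.elim (fun h => q.lo_sub h) id
    rcases leaf_pairs K a b hab hfab hb q hbhi with h | h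
    · exact h
    · exact absurd (h ▸ hq) hra
  have compat : ∀ q ∈ S, q ≠ pb → VPair.Compatible pb q := by
    intro q hq hqpb
    exact ⟨fun h => hqpb (key q hq (Or.inl (h ▸ hbpb_lo))),
           fun h => hqpb (key q hq (Or.inr (h ▸ hbpb_lo))),
           fun h => hqpb (key q hq (Or.inl (h ▸ hbpb_hi))),
           fun h => hqpb (key q hq (Or.inr (h ▸ hbpb_hi)))⟩
  constructor
  · intro p hp q hq hpq
    rcases Set.mem_insert_iff.mp hp with rfl | hp' <;>
      rcases Set.mem_insert_iff.mp hq with h | hq'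
    · exact absurd h.symm hpq
    · exact compat q hq' (Ne.symm hpq)
    · subst h
      obtain ⟨h1, h2, h3, h4⟩ := compat p hp' hpq
      exact ⟨Ne.symm h1, Ne.symm h3, Ne.symm h2, Ne.symm h4⟩
    · exact hS.1 p hp' q hq' hpq
  · rintro ⟨k, hk, c, hmem, hcond⟩
    by_cases hall : ∀ i, c i ∈ S
    · exact hS.2 ⟨k, hk, c, hall, hcond⟩
    · push_neg at hall
      obtain ⟨i, hi⟩ := hall
      have hci : c i = pb := by
        rcases Set.mem_insert_iff.mp (hmem i) with h | h
        · exact h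
        · exact absurd h hi
      have hidx : i - 1 + 1 = i := by ring
      have hj := hcond (i - 1)
      rw [hidx] at hj
      have hbprev : b ∈ (c (i - 1)).hi := hj.1 (by rw [hci]; exact hbpb_lo)
      have hprev : c (i - 1) = pb := by
        rcases Set.mem_insert_iff.mp (hmem (i - 1)) with h | h
        · exact h
        · exact key _ h (Or.inr hbprev)
      exact hj.2.1 (by rw [hci, hprev])

lemma single_face {V : Type*} (K : SComplex V) (P : VPair K) :
    (MorseComplex K).faces {P} := by
  refine ⟨Finset.singleton_nonempty P, ?_, ?_⟩
  · intro p hp q hq hpq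
    exfalso
    apply hpq
    have hp' : p = P := by simpa using hp
    have hq' : q = P := by simpa using hq
    rw [hp', hq']
  · rintro ⟨k, hk, c, hmem, hcond⟩
    have h0 : c 0 = P := by simpa using hmem 0
    have h1 : c (0 + 1) = P := by simpa using hmem (0 + 1)
    exact (hcond 0).2.1 (by rw [h0, h1])

lemma cone_scaux {V : Type*} [Fintype V] [DecidableEq V] (F : Finset V → Prop) (p : V)
    (hp : F {p}) (hne : ∀ σ, F σ → σ.Nonempty)
    (hdown : ∀ σ, F σ → ∀ x ∈ σ, F {x})
    (hcone : ∀ σ, F σ → F (insert p σ)) : SCAux F := by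
  suffices H : ∀ n (F : Finset V → Prop),
      Set.ncard {x | F {x}} ≤ n →
      F {p} → (∀ σ, F σ → σ.Nonempty) → (∀ σ, F σ → ∀ x ∈ σ, F {x}) →
      (∀ σ, F σ → F (insert p σ)) → SCAux F by
    exact H _ F le_rfl hp hne hdown hcone
  intro n
  induction n with
  | zero =>
    intro F hcard hp _ _ _
    exfalso
    have hpos : 0 < Set.ncard {x | F {x}} := (Set.ncard_pos (Set.toFinite _)).mpr ⟨p, hp⟩
    omega
  | succ n ih =>
    intro F hcard hp hne hdown hcone
    by_cases hall : ∀ x, F {x} → x = p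
    · refine SCAux.point F p (fun σ => ⟨fun hσ => ?_, fun h => h ▸ hp⟩)
      have hsub : σ ⊆ {p} := by
        intro x hx
        have := hall x (hdown σ hσ x hx)
        simp [this]
      rcases Finset.subset_singleton_iff.mp hsub with rfl | h
      · exact absurd (hne _ hσ) (by simp)
      · exact h
    · push_neg at hall
      obtain ⟨w', hw', hwp⟩ := hall
      refine SCAux.step F p w' (Ne.symm hwp) hp hw' ?_ ?_
      · rintro σ ⟨hσ, hmax⟩ _
        have heq := hmax _ (hcone σ hσ) (Finset.subset_insert p σ)
        rw [heq]
        exact Finset.mem_insert_self p σ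
      · apply ih
        · have hsub : {x | F {x} ∧ w' ∉ ({x} : Finset V)} ⊆ {x | F {x}} \ {w'} := by
            rintro x ⟨hx1, hx2⟩
            refine ⟨hx1, ?_⟩
            simp only [Set.mem_singleton_iff]
            rintro rfl
            exact hx2 (Finset.mem_singleton_self x)
          have h1 := Set.ncard_le_ncard hsub (Set.toFinite _)
          have h3 := Set.ncard_diff_singleton_of_mem (show w' ∈ {x | F {x}} from hw')
          omega
        · exact ⟨hp, by simp [hwp]⟩
        · exact fun σ h => hne σ h.1
        · rintro σ ⟨hσ, hw's⟩ x hx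
          refine ⟨hdown σ hσ x hx, ?_⟩
          simp only [Finset.mem_singleton]
          rintro rfl
          exact hw's hx
        · rintro σ ⟨hσ, hw's⟩
          refine ⟨hcone σ hσ, ?_⟩
          simp only [Finset.mem_insert]
          rintro (rfl | h)
          · exact hwp rfl
          · exact hw's h

end Aux

/-- if `K` contains two leaves sharing a common vertex, then
`M(K)` is strongly collapsible. -/
theorem stmt_3 {V : Type*} [Fintype V] [DecidableEq V] (K : SComplex V) (a b c : V)
    (hab : a ≠ b) (hac : a ≠ c) (hbc : b ≠ c)
    (hfab : K.faces {a, b}) (hfac : K.faces {a, c})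
    (hb : sdeg K b = 1) (hc : sdeg K c = 1) :
    StronglyCollapsible (MorseComplex K) := by
  classical
  haveI : Fintype (VPair K) := Fintype.ofInjective (fun p : VPair K => (p.lo, p.hi))
    (fun p q h => vpair_ext (congrArg Prod.fst h) (congrArg Prod.snd h))
  set pb := leafPair K a b hab hfab with hpbdef
  set ra := apexPair K a b hab hfab with hradef
  set pc := leafPair K a c hac hfac with hpcdef
  set sa := apexPair K a c hac hfac with hsadef
  have hins : ∀ (P : VPair K) (σ : Finset (VPair K)),
      {p | p ∈ insert P σ} = insert P {p | p ∈ σ} := by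
    intro P σ; ext x; simp
  have hpb_ra : pb ≠ ra := by
    intro h
    have h2 := congrArg VPair.lo h
    simp only [hpbdef, hradef, leafPair, apexPair, Finset.singleton_inj] at h2
    exact hab h2.symm
  have hpb_sa : pb ≠ sa := by
    intro h
    have h2 := congrArg VPair.lo h
    simp only [hpbdef, hsadef, leafPair, apexPair, Finset.singleton_inj] at h2
    exact hab h2.symm
  have hpc_ra : pc ≠ ra := by
    intro h
    have h2 := congrArg VPair.lo h
    simp only [hpcdef, hradef, leafPair, apexPair, Finset.singleton_inj] at h2
    exact hac h2.symm
  have hra_sa : ra ≠ sa := by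
    intro h
    have h2 := congrArg VPair.hi h
    simp only [hradef, hsadef, apexPair] at h2
    have hbm : b ∈ ({a, c} : Finset V) := h2 ▸ (by simp : b ∈ ({a, b} : Finset V))
    rcases Finset.mem_insert.mp hbm with rfl | h3
    · exact hab rfl
    · exact hbc (Finset.mem_singleton.mp h3)
  have extb : ∀ σ : Finset (VPair K), (MorseComplex K).faces σ → ra ∉ σ →
      (MorseComplex K).faces (insert pb σ) := by
    intro σ hσ hr
    exact ⟨Finset.insert_nonempty _ _, by
      rw [hins]; exact extend_gvf K a b hab hfab hb _ hσ.2 hr⟩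
  have extc : ∀ σ : Finset (VPair K), (MorseComplex K).faces σ → sa ∉ σ →
      (MorseComplex K).faces (insert pc σ) := by
    intro σ hσ hs
    exact ⟨Finset.insert_nonempty _ _, by
      rw [hins]; exact extend_gvf K a c hac hfac hc _ hσ.2 hs⟩
  refine SCAux.step _ pc ra hpc_ra (single_face K pc) (single_face K ra) ?_ ?_
  · rintro σ ⟨hσ, hmax⟩ hraσ
    have hsaσ : sa ∉ σ := by
      intro hsaσ
      exact (hσ.2.1 ra hraσ sa hsaσ hra_sa).1 rfl
    have heq := hmax _ (extc σ hσ hsaσ) (Finset.subset_insert _ _)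
    rw [heq]
    exact Finset.mem_insert_self _ _
  · refine SCAux.step _ pb sa hpb_sa
      ⟨single_face K pb, by simp [hpb_ra.symm]⟩
      ⟨single_face K sa, by simp [hra_sa]⟩ ?_ ?_
    · rintro σ ⟨⟨hσ, hraσ⟩, hmax⟩ _
      have h3 : (MorseComplex K).faces (insert pb σ) ∧ ra ∉ insert pb σ := by
        refine ⟨extb σ hσ hraσ, ?_⟩
        simp only [Finset.mem_insert]
        rintro (h | h)
        · exact hpb_ra h.symm
        · exact hraσ h
      have heq := hmax _ h3 (Finset.subset_insert _ _)
      rw [heq]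
      exact Finset.mem_insert_self _ _
    · apply cone_scaux _ pb
      · exact ⟨⟨single_face K pb, by simp [hpb_ra.symm]⟩, by simp [hpb_sa.symm]⟩
      · rintro σ ⟨⟨hσ, _⟩, _⟩
        exact hσ.1
      · rintro σ ⟨⟨hσ, hraσ⟩, hsaσ⟩ x hx
        refine ⟨⟨(MorseComplex K).down_closed hσ (Finset.singleton_subset_iff.mpr hx)
          (Finset.singleton_nonempty x), ?_⟩, ?_⟩
        · simp only [Finset.mem_singleton]
          rintro rfl
          exact hraσ hx
        · simp only [Finset.mem_singleton]
          rintro rfl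
          exact hsaσ hx
      · rintro σ ⟨⟨hσ, hraσ⟩, hsaσ⟩
        refine ⟨⟨extb σ hσ hraσ, ?_⟩, ?_⟩
        · simp only [Finset.mem_insert]
          rintro (h | h)
          · exact hpb_ra h.symm
          · exact hraσ h
        · simp only [Finset.mem_insert]
          rintro (h | h)
          · exact hpb_sa h.symm
          · exact hsaσ h
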